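/- Let (H,R) be a braided bialgebra over a field k with R = Σ s_i⊗t_i, and let K ∈ H be an invertible element satisfying Δ(K) = (K⊗1)·R·(1⊗K)·R_21. For left H-modules M and N define the k-linear map ĉ_{M,N} : M⊗N → N⊗M by ĉ_{M,N}(m⊗n) = Σ (s_i·n)⊗(t_i·m), and let k_M : M → M denote the k-linear map given by the action of K. Then for all left H-modules M,N the reflection equation holds as an identity of k-linear endomorphisms of M⊗N: (k_M⊗id_N)∘ĉ_{N,M}∘(k_N⊗id_M)∘ĉ_{M,N} = ĉ_{N,M}∘(k_N⊗id_M)∘ĉ_{M,N}∘(k_M⊗id_N). -/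

import Mathlib

/- Braided bialgebras: basic tensor-leg maps and the universal R-matrix axioms. -/

open scoped TensorProduct

noncomputable section

variable (k H : Type*) [Field k] [Ring H] [Bialgebra k H]

/-- The flip `a ⊗ b ↦ b ⊗ a` on `H ⊗[k] H`, as an algebra homomorphism. -/
def tflip : H ⊗[k] H →ₐ[k] H ⊗[k] H := (Algebra.TensorProduct.comm k H H).toAlgHom

/-- `s ⊗ t ↦ s ⊗ t ⊗ 1 : H ⊗ H → H ⊗ H ⊗ H`. -/
def leg12 : H ⊗[k] H →ₐ[k] H ⊗[k] (H ⊗[k] H) :=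
  Algebra.TensorProduct.map (AlgHom.id k H) Algebra.TensorProduct.includeLeft

/-- `s ⊗ t ↦ s ⊗ 1 ⊗ t : H ⊗ H → H ⊗ H ⊗ H`. -/
def leg13 : H ⊗[k] H →ₐ[k] H ⊗[k] (H ⊗[k] H) :=
  Algebra.TensorProduct.map (AlgHom.id k H) Algebra.TensorProduct.includeRight

/-- `s ⊗ t ↦ 1 ⊗ s ⊗ t : H ⊗ H → H ⊗ H ⊗ H`. -/
def leg23 : H ⊗[k] H →ₐ[k] H ⊗[k] (H ⊗[k] H) :=
  Algebra.TensorProduct.includeRight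

/-- `Δ ⊗ id : H ⊗ H → H ⊗ H ⊗ H`. -/
def comulLeft : H ⊗[k] H →ₐ[k] H ⊗[k] (H ⊗[k] H) :=
  (Algebra.TensorProduct.assoc (R := k) (S := k) (T := k) (A := H) (C := H) (D := H)).toAlgHom.comp
    (Algebra.TensorProduct.map (Bialgebra.comulAlgHom k H) (AlgHom.id k H))

/-- `id ⊗ Δ : H ⊗ H → H ⊗ H ⊗ H`. -/
def comulRight : H ⊗[k] H →ₐ[k] H ⊗[k] (H ⊗[k] H) :=
  Algebra.TensorProduct.map (AlgHom.id k H) (Bialgebra.comulAlgHom k H)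

/-- `(H, R)` is a braided bialgebra with `R⁻¹ = Rinv`:  `R` is an invertible element of
`H ⊗ H` satisfying `Δ(x) · R = R · Δ^op(x)` for all `x` and the two hexagon identities
`(Δ ⊗ id)(R) = R₂₃ · R₁₃` and `(id ⊗ Δ)(R) = R₁₂ · R₁₃`. -/
def IsUniversalRMatrix (R Rinv : H ⊗[k] H) : Prop :=
  R * Rinv = 1 ∧ Rinv * R = 1 ∧
  (∀ x : H, Bialgebra.comulAlgHom k H x * R = R * tflip k H (Bialgebra.comulAlgHom k H x)) ∧
  comulLeft k H R = leg23 k H R * leg13 k H R ∧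
  comulRight k H R = leg12 k H R * leg13 k H R

/-- The action of an element `z = Σ sᵢ ⊗ tᵢ` of `H ⊗ H` on `M ⊗ N`
(first leg acting on `M`, second leg acting on `N`). -/
def act2 (M N : Type*) [AddCommGroup M] [Module k M] [Module H M]
    [IsScalarTower k H M] [SMulCommClass H k M]
    [AddCommGroup N] [Module k N] [Module H N]
    [IsScalarTower k H N] [SMulCommClass H k N]
    (z : H ⊗[k] H) : M ⊗[k] N →ₗ[k] M ⊗[k] N :=
  TensorProduct.homTensorHomMap (RingHom.id k) M N M N
    (TensorProduct.map (Algebra.lsmul k k M (A := H)).toLinearMap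
      (Algebra.lsmul k k N (A := H)).toLinearMap z)

/-- The braiding-type map `M ⊗ N → N ⊗ M` determined by `z = Σ sᵢ ⊗ tᵢ ∈ H ⊗ H`:
`m ⊗ n ↦ Σ (sᵢ · n) ⊗ (tᵢ · m)`. -/
def braidMap (M N : Type*) [AddCommGroup M] [Module k M] [Module H M]
    [IsScalarTower k H M] [SMulCommClass H k M]
    [AddCommGroup N] [Module k N] [Module H N]
    [IsScalarTower k H N] [SMulCommClass H k N]
    (z : H ⊗[k] H) : M ⊗[k] N →ₗ[k] N ⊗[k] M :=
  (act2 k H N M z).comp (TensorProduct.comm k M N).toLinearMap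

/-- The `k`-linear endomorphism of `M` given by the action of `K ∈ H`. -/
def actK (M : Type*) [AddCommGroup M] [Module k M] [Module H M]
    [IsScalarTower k H M] [SMulCommClass H k M]
    (K : H) : M →ₗ[k] M :=
  Algebra.lsmul k k M (A := H) K

section Helpers

variable (M N : Type*) [AddCommGroup M] [Module k M] [Module H M]
    [IsScalarTower k H M] [SMulCommClass H k M]
    [AddCommGroup N] [Module k N] [Module H N]
    [IsScalarTower k H N] [SMulCommClass H k N]

lemma tflip_tmul (a b : H) : tflip k H (a ⊗ₜ[k] b) = b ⊗ₜ[k] a := rfl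

lemma tflip_tflip (z : H ⊗[k] H) : tflip k H (tflip k H z) = z := by
  induction z using TensorProduct.induction_on with
  | zero => simp
  | tmul a b => rfl
  | add x y hx hy => simp [map_add, hx, hy]

lemma act2_tmul (s t : H) (m : M) (n : N) :
    act2 k H M N (s ⊗ₜ[k] t) (m ⊗ₜ[k] n) = (s • m) ⊗ₜ[k] (t • n) := by
  simp [act2]

lemma act2_zero : act2 k H M N 0 = 0 := by simp [act2]

lemma act2_add (z w : H ⊗[k] H) :
    act2 k H M N (z + w) = act2 k H M N z + act2 k H M N w := by
  simp [act2]

lemma act2_mul (z w : H ⊗[k] H) :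
    act2 k H M N (z * w) = (act2 k H M N z).comp (act2 k H M N w) := by
  induction z using TensorProduct.induction_on with
  | zero => simp [act2_zero]
  | add x y hx hy =>
      rw [add_mul, act2_add, act2_add, hx, hy, LinearMap.add_comp]
  | tmul s t =>
      induction w using TensorProduct.induction_on with
      | zero => simp [act2_zero]
      | add x y hx hy =>
          rw [mul_add, act2_add, act2_add, hx, hy, LinearMap.comp_add]
      | tmul u v =>
          rw [Algebra.TensorProduct.tmul_mul_tmul]
          apply TensorProduct.ext'
          intro m n
          simp [act2_tmul, mul_smul]

lemma comm_act2 (z : H ⊗[k] H) :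
    (act2 k H N M (tflip k H z)).comp (TensorProduct.comm k M N).toLinearMap
      = (TensorProduct.comm k M N).toLinearMap.comp (act2 k H M N z) := by
  induction z using TensorProduct.induction_on with
  | zero => simp [act2_zero]
  | add x y hx hy =>
      rw [map_add, act2_add, act2_add, LinearMap.add_comp, LinearMap.comp_add, hx, hy]
  | tmul s t =>
      apply TensorProduct.ext'
      intro m n
      simp [tflip_tmul, act2_tmul]

lemma act2_Kleft (K : H) :
    act2 k H M N (K ⊗ₜ[k] (1 : H)) = TensorProduct.map (actK k H M K) LinearMap.id := by
  apply TensorProduct.ext'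
  intro m n
  simp [act2_tmul, actK]

lemma braid_act2 (z w : H ⊗[k] H) :
    (braidMap k H M N z).comp (act2 k H M N w)
      = braidMap k H M N (z * tflip k H w) := by
  unfold braidMap
  rw [LinearMap.comp_assoc, ← comm_act2, act2_mul, LinearMap.comp_assoc]

lemma act2_braid (z w : H ⊗[k] H) :
    (act2 k H N M z).comp (braidMap k H M N w) = braidMap k H M N (z * w) := by
  unfold braidMap
  rw [← LinearMap.comp_assoc, ← act2_mul]

lemma braid_braid (z w : H ⊗[k] H) :
    (braidMap k H N M z).comp (braidMap k H M N w)
      = act2 k H M N (z * tflip k H w) := by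
  have h : braidMap k H M N w = (act2 k H N M w).comp (TensorProduct.comm k M N).toLinearMap := rfl
  rw [h, ← LinearMap.comp_assoc, braid_act2]
  unfold braidMap
  rw [LinearMap.comp_assoc]
  have hcc : (TensorProduct.comm k N M).toLinearMap.comp (TensorProduct.comm k M N).toLinearMap
      = LinearMap.id := by
    apply TensorProduct.ext'; intro m n; rfl
  rw [hcc, LinearMap.comp_id]

end Helpers

lemma key_identity (R Rinv : H ⊗[k] H) (hR : IsUniversalRMatrix k H R Rinv) (K : H)
    (hΔK : Bialgebra.comulAlgHom k H K =
      (K ⊗ₜ[k] (1 : H)) * R * ((1 : H) ⊗ₜ[k] K) * tflip k H R) :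
    (K ⊗ₜ[k] (1 : H)) * R * ((1 : H) ⊗ₜ[k] K) * tflip k H R
      = R * (((1 : H) ⊗ₜ[k] K) * tflip k H R * (K ⊗ₜ[k] (1 : H))) := by
  have h := hR.2.2.1 K
  have hflip : tflip k H (Bialgebra.comulAlgHom k H K)
      = ((1 : H) ⊗ₜ[k] K) * tflip k H R * (K ⊗ₜ[k] (1 : H)) * R := by
    rw [hΔK, map_mul, map_mul, map_mul, tflip_tmul, tflip_tmul, tflip_tflip]
  calc (K ⊗ₜ[k] (1 : H)) * R * ((1 : H) ⊗ₜ[k] K) * tflip k H R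
      = Bialgebra.comulAlgHom k H K := hΔK.symm
    _ = Bialgebra.comulAlgHom k H K * (R * Rinv) := by rw [hR.1, mul_one]
    _ = (Bialgebra.comulAlgHom k H K * R) * Rinv := by rw [mul_assoc]
    _ = (R * tflip k H (Bialgebra.comulAlgHom k H K)) * Rinv := by rw [h]
    _ = R * ((((1 : H) ⊗ₜ[k] K) * tflip k H R * (K ⊗ₜ[k] (1 : H))) * (R * Rinv)) := by
        rw [hflip]; simp only [mul_assoc]
    _ = R * (((1 : H) ⊗ₜ[k] K) * tflip k H R * (K ⊗ₜ[k] (1 : H))) := by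
        rw [hR.1, mul_one]

/-- in a braided bialgebra `(H, R)` with an invertible `K ∈ H` satisfying
`Δ(K) = (K ⊗ 1) · R · (1 ⊗ K) · R₂₁`, the reflection equation holds on every tensor
product `M ⊗ N` of left `H`-modules:
`(k_M ⊗ id) ∘ ĉ_{N,M} ∘ (k_N ⊗ id) ∘ ĉ_{M,N} = ĉ_{N,M} ∘ (k_N ⊗ id) ∘ ĉ_{M,N} ∘ (k_M ⊗ id)`. -/
theorem reflection_equation_on_modules
    (R Rinv : H ⊗[k] H) (hR : IsUniversalRMatrix k H R Rinv)
    (K Kinv : H) (hK : K * Kinv = 1) (hK' : Kinv * K = 1)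
    (hΔK : Bialgebra.comulAlgHom k H K =
      (K ⊗ₜ[k] (1 : H)) * R * ((1 : H) ⊗ₜ[k] K) * tflip k H R)
    (M N : Type*) [AddCommGroup M] [Module k M] [Module H M]
    [IsScalarTower k H M] [SMulCommClass H k M]
    [AddCommGroup N] [Module k N] [Module H N]
    [IsScalarTower k H N] [SMulCommClass H k N] :
    (TensorProduct.map (actK k H M K) LinearMap.id).comp
        ((braidMap k H N M R).comp
          ((TensorProduct.map (actK k H N K) LinearMap.id).comp (braidMap k H M N R)))
      = (braidMap k H N M R).comp
          ((TensorProduct.map (actK k H N K) LinearMap.id).comp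
            ((braidMap k H M N R).comp
              (TensorProduct.map (actK k H M K) LinearMap.id))) := by
  conv_lhs => rw [← act2_Kleft k H M N K, ← act2_Kleft k H N M K,
    act2_braid, braid_braid, ← act2_mul]
  conv_rhs => rw [← act2_Kleft k H M N K, ← act2_Kleft k H N M K,
    braid_act2, act2_braid, braid_braid]
  congr 1
  have hkey := key_identity k H R Rinv hR K hΔK
  simp only [map_mul, tflip_tmul, tflip_tflip, mul_assoc] at hkey ⊢
  exact hkey
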